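/- Let V be a Euclidean n-dimensional space and let ε₁,…,εₙ be linearly independent unit vectors with ⟨εᵢ,εⱼ⟩ ≤ 0 for i ≠ j and 4⟨εᵢ,εⱼ⟩² ∈ {0,1,2,3} for i ≠ j. Then the graph on n vertices with 4⟨εᵢ,εⱼ⟩² edges between i and j contains no cycles (it is a forest). -/

import Mathlib

open scoped RealInnerProductSpace

/-- Let `ε₁, …, εₙ` be linearly independent unit vectors in a
Euclidean space with `⟪εᵢ, εⱼ⟫ ≤ 0` for `i ≠ j` and `4⟪εᵢ, εⱼ⟫² ∈ {0,1,2,3}` for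
`i ≠ j` (an *admissible* configuration).  Then the graph on `n` vertices joining `i`
and `j` by `4⟪εᵢ, εⱼ⟫²` edges contains no cycles (its underlying simple graph, with
`i ∼ j` iff `⟪εᵢ, εⱼ⟫ ≠ 0`, is a forest). -/
theorem admissible_configuration_graph_is_acyclic
    (V : Type*) [NormedAddCommGroup V] [InnerProductSpace ℝ V]
    (n : ℕ) (ε : Fin n → V)
    (hunit : ∀ i, ‖ε i‖ = 1) (hli : LinearIndependent ℝ ε)
    (hneg : ∀ i j, i ≠ j → ⟪ε i, ε j⟫ ≤ 0)
    (hint : ∀ i j, i ≠ j → 4 * ⟪ε i, ε j⟫ ^ 2 ∈ ({0, 1, 2, 3} : Set ℝ)) :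
    (SimpleGraph.fromRel fun i j => ⟪ε i, ε j⟫ ≠ 0).IsAcyclic := by
  set G := SimpleGraph.fromRel fun i j => ⟪ε i, ε j⟫ ≠ 0 with hG
  -- key bound for adjacent vertices
  have key : ∀ i j, G.Adj i j → ⟪ε i, ε j⟫ ≤ -(1/2) := by
    intro i j hij
    obtain ⟨hne, h⟩ := hij
    have hz : ⟪ε i, ε j⟫ ≠ 0 := by
      rcases h with h | h
      · exact h
      · rw [real_inner_comm]; exact h
    have h0 := hneg i j hne
    have h4 := hint i j hne
    simp only [Set.mem_insert_iff, Set.mem_singleton_iff] at h4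
    rcases h4 with h | h | h | h
    · exfalso
      apply hz
      have h2 : ⟪ε i, ε j⟫ ^ 2 = 0 := by linarith
      exact pow_eq_zero_iff (by norm_num) |>.mp h2
    all_goals nlinarith [sq_nonneg ⟪ε i, ε j⟫, sq_nonneg (⟪ε i, ε j⟫ + 1/2)]
  intro u p hp
  classical
  have hnodup : p.support.tail.Nodup := hp.support_nodup
  have h3 : 3 ≤ p.length := hp.three_le_length
  set S : Finset (Fin n) := p.support.tail.toFinset with hS
  have hScard : S.card = p.length := by
    rw [hS, List.toFinset_card_of_nodup hnodup, List.length_tail,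
      SimpleGraph.Walk.length_support]
    omega
  -- every support vertex is in S
  have hmemS : ∀ x, x ∈ p.support → x ∈ S := by
    intro x hx
    rw [hS, List.mem_toFinset]
    have htne : p.support.tail ≠ [] := by
      intro hnil
      have := congrArg List.length hnil
      simp only [List.length_tail, SimpleGraph.Walk.length_support,
        List.length_nil] at this
      omega
    rw [p.support_eq_cons, List.mem_cons] at hx
    rcases hx with rfl | hx
    · have hmem : p.support.tail.getLast htne ∈ p.support.tail := List.getLast_mem htne
      rwa [List.getLast_tail, p.getLast_support] at hmem
    · exact hx
  -- darts are nodup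
  have hdarts : p.darts.Nodup := by
    have := hp.edges_nodup
    rw [SimpleGraph.Walk.edges] at this
    exact this.of_map _
  -- the list of ordered pairs coming from darts, both directions
  set L : List (Fin n × Fin n) :=
    p.darts.map (fun d => d.toProd) ++ p.darts.map (fun d => d.toProd.swap) with hL
  have hinj : ∀ d₁ ∈ p.darts, ∀ d₂ ∈ p.darts,
      d₁.edge = d₂.edge → d₁ = d₂ := by
    have := hp.edges_nodup
    rw [SimpleGraph.Walk.edges] at this
    exact fun d₁ h₁ d₂ h₂ h => List.inj_on_of_nodup_map this h₁ h₂ h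
  have hLnd : L.Nodup := by
    rw [hL, List.nodup_append]
    refine ⟨hdarts.map (fun a b h => SimpleGraph.Dart.ext a b h),
      hdarts.map (fun a b h => SimpleGraph.Dart.ext a b (Prod.swap_injective h)), ?_⟩
    intro q hq q' hq' hqq
    subst hqq
    obtain ⟨d₁, hd₁, rfl⟩ := List.mem_map.mp hq
    obtain ⟨d₂, hd₂, hd⟩ := List.mem_map.mp hq'
    have hne : d₁.toProd.1 ≠ d₁.toProd.2 := d₁.adj.ne
    have hedge : d₂.edge = d₁.edge := by
      simp only [SimpleGraph.Dart.edge, ← hd, Sym2.mk_prod_swap_eq]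
      exact Sym2.eq_swap
    have heq : d₂ = d₁ := hinj d₂ hd₂ d₁ hd₁ hedge
    subst heq
    have hfst := congrArg Prod.fst hd
    simp only [Prod.fst_swap] at hfst
    exact hne hfst.symm
  have hLlen : L.length = 2 * p.length := by
    simp [hL, SimpleGraph.Walk.length_darts, two_mul]
  -- each element of L is an offDiag pair with small inner product
  have hLmem : ∀ q ∈ L, q ∈ S.offDiag ∧ ⟪ε q.1, ε q.2⟫ ≤ -(1/2) := by
    intro q hq
    rw [hL, List.mem_append] at hq
    have hqd : ∃ d ∈ p.darts, q = d.toProd ∨ q = d.toProd.swap := by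
      rcases hq with h | h
      · obtain ⟨d, hd, rfl⟩ := List.mem_map.mp h; exact ⟨d, hd, Or.inl rfl⟩
      · obtain ⟨d, hd, rfl⟩ := List.mem_map.mp h; exact ⟨d, hd, Or.inr rfl⟩
    obtain ⟨d, hd, hq⟩ := hqd
    have h1 : d.fst ∈ S := hmemS _ (SimpleGraph.Walk.dart_fst_mem_support_of_mem_darts p hd)
    have h2 : d.snd ∈ S := hmemS _ (SimpleGraph.Walk.dart_snd_mem_support_of_mem_darts p hd)
    have hadj : G.Adj d.fst d.snd := d.adj
    rcases hq with rfl | rfl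
    · exact ⟨Finset.mem_offDiag.mpr ⟨h1, h2, hadj.ne⟩, key _ _ hadj⟩
    · exact ⟨Finset.mem_offDiag.mpr ⟨h2, h1, hadj.symm.ne⟩, key _ _ hadj.symm⟩
  set T : Finset (Fin n × Fin n) := L.toFinset with hT
  have hTcard : T.card = 2 * p.length := by
    rw [hT, List.toFinset_card_of_nodup hLnd, hLlen]
  have hTsub : T ⊆ S.offDiag := by
    intro q hq
    exact (hLmem q (List.mem_toFinset.mp hq)).1
  -- the vector
  set v : V := ∑ i ∈ S, ε i with hv
  have hv0 : v ≠ 0 := by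
    intro h
    have hne : S.Nonempty := by
      rw [← Finset.card_pos, hScard]; omega
    obtain ⟨i, hi⟩ := hne
    have := linearIndependent_iff'.mp hli S (fun _ => 1) (by simpa using h) i hi
    norm_num at this
  have hvv : ⟪v, v⟫ > 0 := by
    rcases lt_or_eq_of_le (real_inner_self_nonneg (x := v)) with h | h
    · exact h
    · exact absurd (inner_self_eq_zero.mp h.symm) hv0
  have expand : ⟪v, v⟫ = ∑ q ∈ S ×ˢ S, ⟪ε q.1, ε q.2⟫ := by
    rw [hv, sum_inner, Finset.sum_product]
    exact Finset.sum_congr rfl fun i _ => by rw [inner_sum]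
  have hdiag : ∑ q ∈ S.diag, ⟪ε q.1, ε q.2⟫ = (S.card : ℝ) := by
    rw [Finset.sum_diag]
    have h1 : ∀ i ∈ S, ⟪ε i, ε i⟫ = (1 : ℝ) := by
      intro i _
      rw [real_inner_self_eq_norm_sq, hunit]; norm_num
    rw [Finset.sum_congr rfl h1]; simp
  have hsplit : ∑ q ∈ S ×ˢ S, ⟪ε q.1, ε q.2⟫ =
      (S.card : ℝ) + ∑ q ∈ S.offDiag, ⟪ε q.1, ε q.2⟫ := by
    rw [← Finset.diag_union_offDiag S,
      Finset.sum_union (Finset.disjoint_diag_offDiag S), hdiag]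
  have hoff : ∑ q ∈ S.offDiag, ⟪ε q.1, ε q.2⟫ ≤ -(S.card : ℝ) := by
    have e := Finset.sum_sdiff (f := fun q : Fin n × Fin n => ⟪ε q.1, ε q.2⟫) hTsub
    have hnp : ∑ q ∈ S.offDiag \ T, ⟪ε q.1, ε q.2⟫ ≤ 0 :=
      Finset.sum_nonpos fun q hq =>
        hneg _ _ (Finset.mem_offDiag.mp (Finset.mem_sdiff.mp hq).1).2.2
    have h2 : ∑ q ∈ T, ⟪ε q.1, ε q.2⟫ ≤ T.card • (-(1/2) : ℝ) := by
      apply Finset.sum_le_card_nsmul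
      intro q hq
      exact (hLmem q (List.mem_toFinset.mp hq)).2
    rw [hTcard, nsmul_eq_mul] at h2
    rw [hScard]
    push_cast at h2 ⊢
    linarith
  rw [expand, hsplit] at hvv
  linarith
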